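/- A nonnegative bounded measurable function f of compact support on ℝ² is uniquely determined by its histogram Radon transform: if Hf = Hg as measures for all lines, then in particular R(f^k) = R(g^k) for all k, and hence f = g almost everywhere. -/

import Mathlib

open MeasureTheory Complex FourierTransform
open scoped InnerProductSpace ContDiff RealInnerProductSpace

/-- A smooth compactly supported function is a Schwartz function. -/
noncomputable def mySchwartz (ψ : ℂ → ℂ) (h1 : ContDiff ℝ ∞ ψ) (h2 : HasCompactSupport ψ) :
    SchwartzMap ℂ ℂ where
  toFun := ψ
  smooth' := h1
  decay' := by
    intro k n
    have hc : Continuous fun x : ℂ => ‖x‖ ^ k * ‖iteratedFDeriv ℝ n ψ x‖ :=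
      (continuous_norm.pow k).mul (h1.continuous_iteratedFDeriv (by exact_mod_cast le_top)).norm
    have hcs : HasCompactSupport fun x : ℂ => ‖x‖ ^ k * ‖iteratedFDeriv ℝ n ψ x‖ :=
      ((h2.iteratedFDeriv n).norm).mul_left
    rcases hcs.exists_bound_of_continuous hc with ⟨C, hC⟩
    refine ⟨C, fun x => ?_⟩
    have := hC x
    rwa [Real.norm_eq_abs, _root_.abs_of_nonneg (by positivity)] at this

set_option maxHeartbeats 2000000 in
theorem histogram_radon_determines_function
    (f g : ℝ × ℝ → ℝ) (hf : Measurable f) (hg : Measurable g)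
    (hfs : HasCompactSupport f) (hgs : HasCompactSupport g)
    (hf0 : ∀ x, 0 ≤ f x) (hg0 : ∀ x, 0 ≤ g x)
    (C : ℝ) (hfC : ∀ x, f x ≤ C) (hgC : ∀ x, g x ≤ C)
    (ℓ : ℝ → ℝ → ℝ → ℝ × ℝ)
    (hℓ : ℓ = fun θ p s =>
      (p * Real.cos θ - s * Real.sin θ, p * Real.sin θ + s * Real.cos θ))
    (hH : ∀ θ p : ℝ,
      Measure.map (fun s => f (ℓ θ p s)) volume
        = Measure.map (fun s => g (ℓ θ p s)) volume) :
    (∀ (k : ℕ) (θ p : ℝ),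
        ∫ s : ℝ, (f (ℓ θ p s)) ^ k = ∫ s : ℝ, (g (ℓ θ p s)) ^ k)
    ∧ f =ᵐ[volume] g := by
  have hl : ∀ θ p, Continuous fun s : ℝ => ℓ θ p s := by
    subst hℓ; intro θ p
    exact (continuous_const.sub (continuous_id.mul continuous_const)).prodMk
      (continuous_const.add (continuous_id.mul continuous_const))
  have hfl : ∀ θ p, Measurable fun s : ℝ => f (ℓ θ p s) := fun θ p => hf.comp (hl θ p).measurable
  have hgl : ∀ θ p, Measurable fun s : ℝ => g (ℓ θ p s) := fun θ p => hg.comp (hl θ p).measurable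
  -- Part 1: moments
  have hmom : ∀ (k : ℕ) (θ p : ℝ),
      ∫ s : ℝ, (f (ℓ θ p s)) ^ k = ∫ s : ℝ, (g (ℓ θ p s)) ^ k := by
    intro k θ p
    have h1 := integral_map (μ := volume) (hfl θ p).aemeasurable
      (f := fun x : ℝ => x ^ k) (measurable_id.pow_const k).aestronglyMeasurable
    have h2 := integral_map (μ := volume) (hgl θ p).aemeasurable
      (f := fun x : ℝ => x ^ k) (measurable_id.pow_const k).aestronglyMeasurable
    rw [← h1, ← h2, hH θ p]
  refine ⟨hmom, ?_⟩
  have hline : ∀ θ p : ℝ, ∫ s : ℝ, f (ℓ θ p s) = ∫ s : ℝ, g (ℓ θ p s) := by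
    intro θ p; simpa using hmom 1 θ p
  -- integrability
  have key_int : ∀ u : ℝ × ℝ → ℝ, Measurable u → HasCompactSupport u →
      (∀ x, 0 ≤ u x) → (∀ x, u x ≤ C) → Integrable u volume := by
    intro u hu hus hu0 huC
    have hKm : MeasurableSet (tsupport u) := (isClosed_tsupport u).measurableSet
    have hind : Integrable ((tsupport u).indicator fun _ => C) volume := by
      rw [integrable_indicator_iff hKm]
      exact integrableOn_const hus.measure_lt_top.ne
    refine hind.mono' hu.aestronglyMeasurable (Filter.Eventually.of_forall fun x => ?_)
    · by_cases hx : x ∈ tsupport u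
      · simpa [Set.indicator_of_mem hx, Real.norm_eq_abs, _root_.abs_of_nonneg (hu0 x)] using huC x
      · simp [Set.indicator_of_notMem hx, image_eq_zero_of_notMem_tsupport hx]
  have hfI : Integrable f volume := key_int f hf hfs hf0 hfC
  have hgI : Integrable g volume := key_int g hg hgs hg0 hgC
  -- move to ℂ
  set e := Complex.measurableEquivRealProd with he
  have hep : MeasurePreserving e volume volume := Complex.volume_preserving_equiv_real_prod
  have hFI : Integrable (fun z : ℂ => f (e z)) volume :=
    (hep.integrable_comp hfI.aestronglyMeasurable).2 hfI
  have hGI : Integrable (fun z : ℂ => g (e z)) volume :=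
    (hep.integrable_comp hgI.aestronglyMeasurable).2 hgI
  set Hc : ℂ → ℂ := fun z => ((f (e z) - g (e z) : ℝ) : ℂ) with hHc
  have hHcI : Integrable Hc volume := (hFI.sub hGI).ofReal
  -- Fourier transform of Hc vanishes
  have hFourier : ∀ w : ℂ, 𝓕 Hc w = 0 := by
    intro w
    obtain ⟨r, θ, hw⟩ : ∃ r θ : ℝ, w = (r : ℂ) * Complex.exp (θ * Complex.I) := by
      rcases eq_or_ne w 0 with h0 | h0
      · exact ⟨0, 0, by simp [h0]⟩
      · exact ⟨‖w‖, Complex.arg w, (Complex.norm_mul_exp_arg_mul_I w).symm⟩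
    set T : ℝ × ℝ → ℂ := fun q => rotation (Circle.exp θ) (e.symm q) with hT
    have hTmp : MeasurePreserving T volume volume :=
      ((rotation (Circle.exp θ)).measurePreserving).comp hep.symm
    have hTemb : MeasurableEmbedding T :=
      ((rotation (Circle.exp θ)).toHomeomorph.measurableEmbedding).comp
        e.symm.measurableEmbedding
    have hTre : ∀ q : ℝ × ℝ, (T q).re = q.1 * Real.cos θ - q.2 * Real.sin θ := by
      intro q
      simp [hT, he, rotation_apply, Circle.coe_exp, Complex.measurableEquivRealProd_symm_apply,
        Complex.mul_re, Complex.exp_ofReal_mul_I_re, Complex.exp_ofReal_mul_I_im]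
      ring
    have hTim : ∀ q : ℝ × ℝ, (T q).im = q.1 * Real.sin θ + q.2 * Real.cos θ := by
      intro q
      simp [hT, he, rotation_apply, Circle.coe_exp, Complex.measurableEquivRealProd_symm_apply,
        Complex.mul_im, Complex.exp_ofReal_mul_I_re, Complex.exp_ofReal_mul_I_im]
      ring
    have hTe : ∀ p s : ℝ, e (T (p, s)) = ℓ θ p s := by
      intro p s
      have : e (T (p, s)) = ((T (p, s)).re, (T (p, s)).im) := rfl
      rw [this, hTre (p, s), hTim (p, s), hℓ]
    have hwre : w.re = r * Real.cos θ := by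
      rw [hw]; simp [Complex.mul_re, Complex.exp_ofReal_mul_I_re, Complex.exp_ofReal_mul_I_im]
    have hwim : w.im = r * Real.sin θ := by
      rw [hw]; simp [Complex.mul_im, Complex.exp_ofReal_mul_I_re, Complex.exp_ofReal_mul_I_im]
    have hinner : ∀ q : ℝ × ℝ, ⟪T q, w⟫ = r * q.1 := by
      intro q
      have h1 : ⟪T q, w⟫ = (T q).re * w.re + (T q).im * w.im := by
        rw [Complex.inner]
        simp only [Complex.mul_re, Complex.conj_re, Complex.conj_im]
        ring
      rw [h1, hTre q, hTim q, hwre, hwim]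
      have hsc : Real.sin θ ^ 2 + Real.cos θ ^ 2 = 1 := Real.sin_sq_add_cos_sq θ
      linear_combination (q.1 * r) * hsc
    -- integrability facts
    have hHcT : Integrable (fun q : ℝ × ℝ => Hc (T q)) volume :=
      (hTmp.integrable_comp hHcI.aestronglyMeasurable).2 hHcI
    have hfT : Integrable (fun q : ℝ × ℝ => f (e (T q))) volume :=
      (hTmp.integrable_comp hFI.aestronglyMeasurable).2 hFI
    have hgT : Integrable (fun q : ℝ × ℝ => g (e (T q))) volume :=
      (hTmp.integrable_comp hGI.aestronglyMeasurable).2 hGI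
    have hcont : Continuous fun q : ℝ × ℝ => ((𝐞 (-(r * q.1)) : Circle) : ℂ) :=
      continuous_subtype_val.comp
        (Real.continuous_fourierChar.comp (continuous_const.mul continuous_fst).neg)
    have hInt : Integrable (fun q : ℝ × ℝ => ((𝐞 (-(r * q.1)) : Circle) : ℂ) * Hc (T q))
        volume :=
      hHcT.bdd_mul (c := 1) hcont.aestronglyMeasurable (Filter.Eventually.of_forall fun q => (Circle.norm_coe (𝐞 (-(r * q.1)))).le)
    have hfae : ∀ᵐ p : ℝ, Integrable (fun s : ℝ => f (e (T (p, s)))) volume := by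
      rw [Measure.volume_eq_prod] at hfT; exact hfT.prod_right_ae
    have hgae : ∀ᵐ p : ℝ, Integrable (fun s : ℝ => g (e (T (p, s)))) volume := by
      rw [Measure.volume_eq_prod] at hgT; exact hgT.prod_right_ae
    have hinner0 : ∀ᵐ p : ℝ,
        (∫ s : ℝ, ((𝐞 (-(r * p)) : Circle) : ℂ) * Hc (T (p, s))) = 0 := by
      filter_upwards [hfae, hgae] with p hfp hgp
      rw [integral_const_mul]
      have hfp' : Integrable (fun s : ℝ => f (ℓ θ p s)) volume := by
        have := hfp; simp only [hTe p] at this; exact this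
      have hgp' : Integrable (fun s : ℝ => g (ℓ θ p s)) volume := by
        have := hgp; simp only [hTe p] at this; exact this
      have hz : (∫ s : ℝ, Hc (T (p, s))) = 0 := by
        have hsub : Integrable (fun s : ℝ => f (ℓ θ p s) - g (ℓ θ p s)) volume :=
          hfp'.sub hgp'
        have h9 : (∫ s : ℝ, Hc (T (p, s)))
            = Complex.ofRealCLM (∫ s : ℝ, (f (ℓ θ p s) - g (ℓ θ p s))) := by
          rw [← ContinuousLinearMap.integral_comp_comm _ hsub]
          congr 1; funext s; rw [hHc]; simp only [hTe p s]; rfl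
        rw [h9, integral_sub hfp' hgp', hline θ p, sub_self]
        simp
      rw [hz, mul_zero]
    calc 𝓕 Hc w = ∫ z : ℂ, 𝐞 (-⟪z, w⟫) • Hc z := Real.fourier_eq Hc w
      _ = ∫ q : ℝ × ℝ, 𝐞 (-⟪T q, w⟫) • Hc (T q) :=
        (hTmp.integral_comp hTemb fun z => 𝐞 (-⟪z, w⟫) • Hc z).symm
      _ = ∫ q : ℝ × ℝ, ((𝐞 (-(r * q.1)) : Circle) : ℂ) * Hc (T q) := by
        simp_rw [hinner, Circle.smul_def, smul_eq_mul]
      _ = ∫ p : ℝ, ∫ s : ℝ, ((𝐞 (-(r * p)) : Circle) : ℂ) * Hc (T (p, s)) := by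
        rw [Measure.volume_eq_prod] at hInt ⊢
        have hInt2 : Integrable
            (Function.uncurry fun p s => ((𝐞 (-(r * p)) : Circle) : ℂ) * Hc (T (p, s)))
            ((volume : Measure ℝ).prod volume) := hInt
        exact (integral_integral hInt2).symm
      _ = ∫ p : ℝ, (0 : ℂ) := integral_congr_ae hinner0
      _ = 0 := by simp
  -- pairing with Schwartz functions
  have hpair : ∀ ψ : SchwartzMap ℂ ℂ, (∫ z : ℂ, Hc z • (ψ : ℂ → ℂ) z) = 0 := by
    intro ψ
    set φ : SchwartzMap ℂ ℂ := (FourierTransform.fourierCLE ℂ (SchwartzMap ℂ ℂ)).symm ψ with hφ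
    have hφF : 𝓕 (φ : ℂ → ℂ) = (ψ : ℂ → ℂ) := by
      rw [← SchwartzMap.fourier_coe, ← FourierTransform.fourierCLE_apply (R := ℂ), hφ,
        ContinuousLinearEquiv.apply_symm_apply]
    have hflip : (innerₗ ℂ).flip = innerₗ ℂ := by
      apply LinearMap.ext; intro x; apply LinearMap.ext; intro y
      simp [real_inner_comm]
    have hLc : Continuous fun p : ℂ × ℂ => innerₗ ℂ p.1 p.2 := by
      simpa using (continuous_inner : Continuous fun p : ℂ × ℂ => ⟪p.1, p.2⟫)
    have hmul := VectorFourier.integral_fourierIntegral_smul_eq_flip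
      (e := Real.fourierChar) (L := innerₗ ℂ) (μ := volume) (ν := volume)
      Real.continuous_fourierChar hLc hHcI φ.integrable
    rw [hflip] at hmul
    have h1 : (∫ ξ : ℂ, (VectorFourier.fourierIntegral 𝐞 volume (innerₗ ℂ) Hc ξ)
        • (φ : ℂ → ℂ) ξ) = 0 := by
      have hz : ∀ ξ : ℂ, (VectorFourier.fourierIntegral 𝐞 volume (innerₗ ℂ) Hc ξ) = 0 :=
        fun ξ => hFourier ξ
      simp [hz]
    have h2 : ∀ x : ℂ, (VectorFourier.fourierIntegral 𝐞 volume (innerₗ ℂ) (φ : ℂ → ℂ) x)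
        = (ψ : ℂ → ℂ) x := fun x => congrFun hφF x
    simp_rw [h2] at hmul
    rw [← hmul, h1]
  -- conclude a.e. equality on ℂ
  have hae : ∀ᵐ z : ℂ ∂volume, f (e z) - g (e z) = 0 := by
    apply ae_eq_zero_of_integral_contDiff_smul_eq_zero ((hFI.sub hGI).locallyIntegrable)
    intro ψ hψ hψc
    have hs := hpair (mySchwartz (fun z => ((ψ z : ℝ) : ℂ))
      (Complex.ofRealCLM.contDiff.comp hψ) (show HasCompactSupport fun z => ((ψ z : ℝ) : ℂ) from
        hψc.comp_left (g := Complex.ofReal) (by simp)))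
    have hint2 : Integrable (fun z : ℂ => ψ z • (f (e z) - g (e z))) volume := by
      simp_rw [smul_eq_mul]
      exact (hFI.sub hGI).bdd_mul hψ.continuous.aestronglyMeasurable
        (Filter.Eventually.of_forall (hψc.exists_bound_of_continuous hψ.continuous).choose_spec)
    have hrw : (∫ z : ℂ, Hc z • ((mySchwartz (fun z => ((ψ z : ℝ) : ℂ))
          (Complex.ofRealCLM.contDiff.comp hψ) (show HasCompactSupport fun z => ((ψ z : ℝ) : ℂ) from
            hψc.comp_left (g := Complex.ofReal) (by simp)) : ℂ → ℂ) z))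
        = Complex.ofRealCLM (∫ z : ℂ, ψ z • (f (e z) - g (e z))) := by
      rw [← ContinuousLinearMap.integral_comp_comm _ hint2]
      congr 1
      funext z
      simp only [hHc, mySchwartz, smul_eq_mul, Complex.ofRealCLM_apply, Complex.ofReal_mul]
      exact mul_comm _ _
    rw [hrw] at hs
    simp only [Complex.ofRealCLM_apply] at hs
    exact_mod_cast hs
  -- transfer back to ℝ × ℝ
  have hfin : ∀ᵐ x ∂(Measure.map e volume), f x = g x := by
    rw [e.measurableEmbedding.ae_map_iff]
    filter_upwards [hae] with z hz
    linarith [hz]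
  rwa [hep.map_eq] at hfin
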